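/- The contour power integrals satisfy the recursion J_{m+1}(l, a) = (i/(2a(m+3)))·( l·J_m(l, a) + (m/(m+2))·J_{m−1}(l, a) ) for all m ≥ 0, with the convention J_{−1} = 0. -/

import Mathlib

open MeasureTheory Real Complex

/-- The contour power integral `J_m(l,a)`. -/
noncomputable def J (m : ℕ) (l a : ℝ) : ℂ :=
  (Complex.exp (Complex.I * Real.pi * ((m:ℂ) - 1) / 4) / (2 * Real.pi * ((m+2).factorial : ℝ))) *
    ∫ ρ : ℝ, Complex.exp ((ρ:ℂ) * l * Complex.exp (Complex.I * Real.pi / 4) - a * ρ^2) * (ρ:ℂ)^m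

lemma aux_bound {b : ℝ} (hb : 0 < b) (k : ℕ) (x : ℝ) :
    |x| ^ k * Real.exp (-(b * x ^ 2)) ≤ Real.sqrt (k.factorial / b ^ k) := by
  have h1 : (b * x ^ 2) ^ k / k.factorial ≤ Real.exp (b * x ^ 2) :=
    Real.pow_div_factorial_le_exp (x := b * x ^ 2) (by positivity) k
  have hfac : (0:ℝ) < k.factorial := by positivity
  have h2 : (|x| ^ k) ^ 2 ≤ (k.factorial / b ^ k) * Real.exp (b * x ^ 2) := by
    have : (|x| ^ k) ^ 2 = (x ^ 2) ^ k := by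
      rw [← pow_mul, ← pow_mul, mul_comm k 2, pow_mul, _root_.sq_abs, ← pow_mul]
    rw [this]
    rw [div_le_iff₀ hfac] at h1
    calc (x ^ 2) ^ k = (b * x ^ 2) ^ k / b ^ k := by
          rw [mul_pow]; field_simp
      _ ≤ Real.exp (b * x ^ 2) * k.factorial / b ^ k := by
          apply div_le_div_of_nonneg_right h1 (by positivity) |>.trans_eq rfl
      _ = (k.factorial / b ^ k) * Real.exp (b * x ^ 2) := by ring
  have h3 : |x| ^ k ≤ Real.sqrt ((k.factorial / b ^ k) * Real.exp (b * x ^ 2)) := by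
    have h4 := Real.sqrt_le_sqrt h2
    rwa [Real.sqrt_sq (by positivity)] at h4
  calc |x| ^ k * Real.exp (-(b * x ^ 2))
      ≤ Real.sqrt ((k.factorial / b ^ k) * Real.exp (b * x ^ 2)) * Real.exp (-(b * x ^ 2)) := by
        apply mul_le_mul_of_nonneg_right h3 (Real.exp_nonneg _)
    _ = Real.sqrt (k.factorial / b ^ k) * (Real.exp (b * x ^ 2 / 2) * Real.exp (-(b * x ^ 2))) := by
        rw [Real.sqrt_mul (by positivity), Real.exp_half]; ring
    _ ≤ Real.sqrt (k.factorial / b ^ k) * 1 := by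
        apply mul_le_mul_of_nonneg_left _ (Real.sqrt_nonneg _)
        rw [← Real.exp_add]
        apply Real.exp_le_one_iff.2
        nlinarith [sq_nonneg x]
    _ = Real.sqrt (k.factorial / b ^ k) := mul_one _

lemma integrable_g_pow {a : ℝ} (ha : 0 < a) (c : ℂ) (k : ℕ) :
    Integrable fun ρ : ℝ ↦ Complex.exp ((ρ:ℂ) * c - (a:ℂ) * (ρ:ℂ) ^ 2) * (ρ:ℂ) ^ k := by
  have hre : (0:ℝ) < ((a/2 : ℝ) : ℂ).re := by simpa using half_pos ha
  have hint := integrable_cexp_quadratic (b := ((a/2 : ℝ) : ℂ)) hre c 0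
  have heq : (fun ρ : ℝ ↦ Complex.exp ((ρ:ℂ) * c - (a:ℂ) * (ρ:ℂ) ^ 2) * (ρ:ℂ) ^ k)
      = fun ρ : ℝ ↦ ((ρ:ℂ) ^ k * Complex.exp (-(((a/2 : ℝ):ℂ)) * (ρ:ℂ) ^ 2)) *
          Complex.exp (-(((a/2 : ℝ):ℂ)) * (ρ:ℂ) ^ 2 + c * (ρ:ℂ) + 0) := by
    funext ρ
    rw [mul_assoc, ← Complex.exp_add]
    have harg : -(((a/2 : ℝ):ℂ)) * (ρ:ℂ) ^ 2 + (-(((a/2 : ℝ):ℂ)) * (ρ:ℂ) ^ 2 + c * (ρ:ℂ) + 0)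
        = (ρ:ℂ) * c - (a:ℂ) * (ρ:ℂ) ^ 2 := by push_cast; ring
    rw [harg]; ring
  rw [heq]
  refine hint.bdd_mul (c := Real.sqrt (k.factorial / (a/2) ^ k)) ?_ ?_
  · exact (Continuous.mul (by continuity) (by continuity)).aestronglyMeasurable
  · refine Filter.Eventually.of_forall fun x ↦ ?_
    have hz : (-(((a/2 : ℝ):ℂ)) * (x:ℂ) ^ 2) = ((-(a/2 * x ^ 2) : ℝ) : ℂ) := by
      push_cast; ring
    have : ‖(x:ℂ) ^ k * Complex.exp (-(((a/2 : ℝ):ℂ)) * (x:ℂ) ^ 2)‖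
        = |x| ^ k * Real.exp (-(a/2 * x ^ 2)) := by
      rw [norm_mul, Complex.norm_exp, hz,
        Complex.ofReal_re, norm_pow, Complex.norm_real, Real.norm_eq_abs]
    rw [this]
    exact aux_bound (half_pos ha) k x

lemma ibp {a : ℝ} (ha : 0 < a) (c : ℂ) (k : ℕ) :
    c * (∫ ρ : ℝ, Complex.exp ((ρ:ℂ) * c - (a:ℂ) * (ρ:ℂ) ^ 2) * (ρ:ℂ) ^ k)
      - 2 * a * (∫ ρ : ℝ, Complex.exp ((ρ:ℂ) * c - (a:ℂ) * (ρ:ℂ) ^ 2) * (ρ:ℂ) ^ (k+1))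
      + k * (∫ ρ : ℝ, Complex.exp ((ρ:ℂ) * c - (a:ℂ) * (ρ:ℂ) ^ 2) * (ρ:ℂ) ^ (k-1)) = 0 := by
  set g : ℝ → ℂ := fun ρ ↦ Complex.exp ((ρ:ℂ) * c - (a:ℂ) * (ρ:ℂ) ^ 2) with hg
  have hderiv : ∀ ρ : ℝ, HasDerivAt (fun ρ : ℝ ↦ g ρ * (ρ:ℂ) ^ k)
      ((g ρ * (ρ:ℂ) ^ k) * c - (2*a) * (g ρ * (ρ:ℂ) ^ (k+1)) + (k:ℂ) * (g ρ * (ρ:ℂ) ^ (k-1))) ρ := by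
    intro ρ
    have hz : HasDerivAt (fun z : ℂ ↦ z * c - (a:ℂ) * z ^ 2)
        (c - 2 * a * ρ) (ρ:ℂ) := by
      have := ((hasDerivAt_id ((ρ:ℝ):ℂ)).mul_const c).sub
        ((hasDerivAt_pow 2 ((ρ:ℝ):ℂ)).const_mul (a:ℂ))
      refine this.congr_deriv ?_
      push_cast; ring
    have hin : HasDerivAt (fun ρ : ℝ ↦ (ρ:ℂ) * c - (a:ℂ) * (ρ:ℂ) ^ 2)
        (c - 2 * a * ρ) ρ := hz.comp_ofReal
    have hexp : HasDerivAt g (g ρ * (c - 2 * a * ρ)) ρ := hin.cexp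
    have hpow : HasDerivAt (fun ρ : ℝ ↦ (ρ:ℂ) ^ k) ((k:ℂ) * (ρ:ℂ) ^ (k-1)) ρ := by
      simpa using (hasDerivAt_pow k ((ρ:ℝ):ℂ)).comp_ofReal
    have := hexp.mul hpow
    refine this.congr_deriv ?_
    rcases Nat.eq_zero_or_pos k with hk | hk
    · subst hk; push_cast; ring
    · have hk1 : k - 1 + 1 = k := Nat.succ_pred_eq_of_pos hk
      have h1 : (ρ:ℂ) ^ k = (ρ:ℂ) ^ (k-1) * ρ := by
        conv_lhs => rw [← hk1, pow_succ]
      have h2 : (ρ:ℂ) ^ (k+1) = (ρ:ℂ) ^ (k-1) * ρ * ρ := by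
        rw [← h1, pow_succ]
      rw [h1, h2]; ring
  have hint : ∀ j : ℕ, Integrable fun ρ : ℝ ↦ g ρ * (ρ:ℂ) ^ j := fun j ↦ integrable_g_pow ha c j
  have hf'int : Integrable fun ρ : ℝ ↦
      (g ρ * (ρ:ℂ) ^ k) * c - (2*a) * (g ρ * (ρ:ℂ) ^ (k+1)) + (k:ℂ) * (g ρ * (ρ:ℂ) ^ (k-1)) :=
    (((hint k).mul_const c).sub ((hint (k+1)).const_mul _)).add ((hint (k-1)).const_mul _)
  have h0 := integral_eq_zero_of_hasDerivAt_of_integrable hderiv hf'int (hint k)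
  have hA : Integrable (fun ρ : ℝ ↦ (g ρ * (ρ:ℂ) ^ k) * c - (2*(a:ℂ)) * (g ρ * (ρ:ℂ) ^ (k+1))) :=
    ((hint k).mul_const c).sub ((hint (k+1)).const_mul _)
  have hB : Integrable (fun ρ : ℝ ↦ ((k:ℕ):ℂ) * (g ρ * (ρ:ℂ) ^ (k-1))) :=
    (hint (k-1)).const_mul _
  have hC : Integrable (fun ρ : ℝ ↦ (g ρ * (ρ:ℂ) ^ k) * c) := (hint k).mul_const c
  have hD : Integrable (fun ρ : ℝ ↦ (2*(a:ℂ)) * (g ρ * (ρ:ℂ) ^ (k+1))) :=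
    (hint (k+1)).const_mul _
  rw [show (fun ρ : ℝ ↦ (g ρ * (ρ:ℂ) ^ k) * c - (2*(a:ℂ)) * (g ρ * (ρ:ℂ) ^ (k+1))
        + ((k:ℕ):ℂ) * (g ρ * (ρ:ℂ) ^ (k-1)))
      = fun ρ : ℝ ↦ ((g ρ * (ρ:ℂ) ^ k) * c - (2*(a:ℂ)) * (g ρ * (ρ:ℂ) ^ (k+1)))
        + ((k:ℕ):ℂ) * (g ρ * (ρ:ℂ) ^ (k-1)) from rfl,
    integral_add hA hB,
    show (fun ρ : ℝ ↦ (g ρ * (ρ:ℂ) ^ k) * c - (2*(a:ℂ)) * (g ρ * (ρ:ℂ) ^ (k+1)))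
      = fun ρ : ℝ ↦ ((g ρ * (ρ:ℂ) ^ k) * c) - ((2*(a:ℂ)) * (g ρ * (ρ:ℂ) ^ (k+1))) from rfl,
    integral_sub hC hD, integral_mul_const, integral_const_mul, integral_const_mul] at h0
  simp only [hg] at h0
  linear_combination h0

lemma coeff_aux (E G Im Imm la mu u v a p K : ℂ) :
    G * E * E / (2 * p * (v * (K * u))) * ((la * E * Im + mu * Imm) / (2 * a))
      = E ^ 2 / (2 * a * v) *
        (la * (G * E / (2 * p * (K * u)) * Im) + mu / u * (G / (2 * p * K) * Imm)) := by
  ring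

lemma exp_I_pi_half : Complex.exp (Complex.I * Real.pi / 2) = Complex.I := by
  rw [show Complex.I * (Real.pi : ℂ) / 2 = ((Real.pi/2 : ℝ) : ℂ) * Complex.I by push_cast; ring,
    Complex.exp_mul_I, ← Complex.ofReal_cos, ← Complex.ofReal_sin]
  simp

set_option maxHeartbeats 2000000 in
theorem J_recursion (l a : ℝ) (ha : 0 < a) (m : ℕ) :
    J (m+1) l a
      = (Complex.I / (2 * a * ((m:ℂ) + 3))) *
          ((l:ℂ) * J m l a
            + ((m:ℂ) / ((m:ℂ) + 2)) * (if m = 0 then 0 else J (m-1) l a)) := by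
  set c : ℂ := (l:ℂ) * Complex.exp (Complex.I * Real.pi / 4) with hc
  have hJ : ∀ j : ℕ, J j l a = (Complex.exp (Complex.I * Real.pi * ((j:ℂ) - 1) / 4)
      / (2 * Real.pi * ((j+2).factorial : ℝ))) *
      ∫ ρ : ℝ, Complex.exp ((ρ:ℂ) * c - (a:ℂ) * (ρ:ℂ) ^ 2) * (ρ:ℂ) ^ j := by
    intro j
    unfold J
    congr 1
    apply integral_congr_ae
    filter_upwards with ρ
    rw [hc, mul_assoc]
  have key := ibp ha c m
  set Im : ℂ := ∫ ρ : ℝ, Complex.exp ((ρ:ℂ) * c - (a:ℂ) * (ρ:ℂ) ^ 2) * (ρ:ℂ) ^ m with hIm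
  set Im1 : ℂ := ∫ ρ : ℝ, Complex.exp ((ρ:ℂ) * c - (a:ℂ) * (ρ:ℂ) ^ 2) * (ρ:ℂ) ^ (m+1) with hIm1
  set Imm : ℂ := ∫ ρ : ℝ, Complex.exp ((ρ:ℂ) * c - (a:ℂ) * (ρ:ℂ) ^ 2) * (ρ:ℂ) ^ (m-1) with hImm
  have ha' : (a:ℂ) ≠ 0 := by exact_mod_cast ha.ne'
  have hIm1eq : Im1 = (c * Im + (m:ℂ) * Imm) / (2 * a) := by
    field_simp
    linear_combination -key
  have hpi : (Real.pi : ℂ) ≠ 0 := by exact_mod_cast Real.pi_ne_zero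
  have hm3 : ((m:ℂ) + 3) ≠ 0 := by
    intro h
    have : ((m:ℝ) + 3) = 0 := by exact_mod_cast congrArg Complex.re h
    nlinarith [Nat.cast_nonneg (α := ℝ) m]
  have hm2 : ((m:ℂ) + 2) ≠ 0 := by
    intro h
    have : ((m:ℝ) + 2) = 0 := by exact_mod_cast congrArg Complex.re h
    nlinarith [Nat.cast_nonneg (α := ℝ) m]
  have hfac1 : (((m+1+2).factorial : ℝ) : ℂ) ≠ 0 := by
    rw [Complex.ofReal_ne_zero]
    exact_mod_cast Nat.factorial_ne_zero _
  have hfac2 : (((m+2).factorial : ℝ) : ℂ) ≠ 0 := by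
    rw [Complex.ofReal_ne_zero]
    exact_mod_cast Nat.factorial_ne_zero _
  have hfacrel : (((m+1+2).factorial : ℝ) : ℂ) = ((m:ℂ) + 3) * (((m+2).factorial : ℝ) : ℂ) := by
    have : (m+1+2).factorial = (m+3) * (m+2).factorial := by
      rw [show m+1+2 = (m+2)+1 by ring, Nat.factorial_succ]
    rw [this]; push_cast; ring
  have hE : Complex.exp (Complex.I * Real.pi / 4) ≠ 0 := Complex.exp_ne_zero _
  have hE2 : Complex.exp (Complex.I * Real.pi / 4) ^ 2 = Complex.I := by
    rw [sq, ← Complex.exp_add,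
      show Complex.I * (Real.pi:ℂ) / 4 + Complex.I * (Real.pi:ℂ) / 4
        = Complex.I * (Real.pi:ℂ) / 2 by ring]
    exact exp_I_pi_half
  rcases Nat.eq_zero_or_pos m with hm0 | hmpos
  · subst hm0
    simp only [if_pos, Nat.cast_zero, mul_zero, zero_mul, zero_div, add_zero]
    rw [hJ (0+1), hJ 0]
    have hIm1' : Im1 = (c * Im) / (2 * a) := by
      rw [hIm1eq]; push_cast; ring
    have h1 : Complex.exp (Complex.I * Real.pi * (((0+1:ℕ):ℂ) - 1) / 4) = 1 := by
      rw [show Complex.I * (Real.pi:ℂ) * (((0+1:ℕ):ℂ) - 1) / 4 = 0 by push_cast; ring,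
        Complex.exp_zero]
    have h0' : Complex.exp (Complex.I * Real.pi * (((0:ℕ):ℂ) - 1) / 4)
        = (Complex.exp (Complex.I * Real.pi / 4))⁻¹ := by
      rw [← Complex.exp_neg]
      congr 1
      push_cast; ring
    rw [h1, h0', ← hIm1, ← hIm, hIm1', hc]
    set E : ℂ := Complex.exp (Complex.I * Real.pi / 4) with hEdef
    rw [← hE2]
    clear_value Im Im1 Imm E
    clear hIm hIm1 hImm key hIm1eq hJ h1 h0' hEdef hc
    norm_num [Nat.factorial]
    field_simp [hE, ha', hpi]
    have hden : (2 * (a:ℂ) * 3 * (E * (2 * (Real.pi:ℂ) * 2))) ≠ 0 := by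
      apply mul_ne_zero (mul_ne_zero (mul_ne_zero two_ne_zero ha') three_ne_zero)
      exact mul_ne_zero hE (by norm_num [hpi])
    ring
  · have hif : (if m = 0 then (0:ℂ) else J (m-1) l a) = J (m-1) l a := by
      rw [if_neg (Nat.pos_iff_ne_zero.mp hmpos)]
    rw [hif, hJ (m+1), hJ m, hJ (m-1)]
    have hm1 : m - 1 + 1 = m := Nat.succ_pred_eq_of_pos hmpos
    have hcastm1 : ((m-1 : ℕ) : ℂ) = (m:ℂ) - 1 := Nat.cast_pred hmpos
    have hcastm1' : ((m+1 : ℕ) : ℂ) = (m:ℂ) + 1 := by push_cast; ring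
    have hfacrel2 : (((m-1+2).factorial : ℝ) : ℂ) * ((m:ℂ) + 2) = (((m+2).factorial : ℝ) : ℂ) := by
      have h1 : m - 1 + 2 = m + 1 := by omega
      have h2 : (m+2).factorial = (m+2) * (m+1).factorial := Nat.factorial_succ _
      rw [h1, h2]; push_cast; ring
    have hfacne : (((m-1+2).factorial : ℝ) : ℂ) ≠ 0 := by
      rw [Complex.ofReal_ne_zero]
      exact_mod_cast Nat.factorial_ne_zero _
    have hA : Complex.exp (Complex.I * Real.pi * (((m+1:ℕ):ℂ) - 1) / 4)
        = Complex.exp (Complex.I * Real.pi * ((m:ℂ) - 1) / 4)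
            * Complex.exp (Complex.I * Real.pi / 4) := by
      rw [← Complex.exp_add, hcastm1']
      congr 1; ring
    have hB : Complex.exp (Complex.I * Real.pi * ((m:ℂ) - 1) / 4)
        = Complex.exp (Complex.I * Real.pi * (((m-1:ℕ):ℂ) - 1) / 4)
            * Complex.exp (Complex.I * Real.pi / 4) := by
      rw [← Complex.exp_add, hcastm1]
      congr 1; ring
    rw [hA, ← hIm1, ← hIm, ← hImm, hIm1eq, hc, hB]
    set E : ℂ := Complex.exp (Complex.I * Real.pi / 4) with hEdef
    set G : ℂ := Complex.exp (Complex.I * Real.pi * (((m-1:ℕ):ℂ) - 1) / 4) with hGdef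
    rw [← hE2, hfacrel, ← hfacrel2]
    clear_value Im Im1 Imm E G
    clear hIm hIm1 hImm key hIm1eq hJ hA hB hEdef hGdef hc
    exact coeff_aux E G Im Imm _ _ _ _ _ _ _
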